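/- Let λ > 0, μ > 0, θ_i > 0, θ_j > 0 be real numbers with θ_i·θ_j < 1, and set s = (θ_i + 1) / (1/θ_j − θ_i). Define the region A ⊆ ℝ² as the set of pairs (x,y) with x ≥ 0, y ≥ 0 such that either [ x/λ ≥ θ_i and (y/μ)/(1 + x/λ) ≥ θ_j ] or [ (x/λ)/(1 + y/μ) ≥ θ_i and (y/μ)/(1 + x/λ) < θ_j ]. Then ∫∫_A e^{−x−y} dx dy = e^{−λθ_i − μθ_j(1+θ_i)} + ( μ e^{−λθ_i} / (λθ_i + μ) ) · ( 1 − e^{−s(λθ_i + μ)} ) + ( μ / (λ/θ_j + μ) ) · ( e^{−s(λ/θ_j + μ) + λ} − e^{−λθ_i − θ_j μ (1+θ_i)} ). -/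

import Mathlib

open MeasureTheory
open Set Real Filter

lemma intB {k : ℝ} (hk : 0 < k) (d c : ℝ) :
    ∫ x in Ioi c, Real.exp (d - k * x) = Real.exp (d - k * c) / k := by
  have hderiv : ∀ x ∈ Ici c, HasDerivAt (fun x => -(Real.exp (d - k * x)) / k)
      (Real.exp (d - k * x)) x := by
    intro x _
    have h1 : HasDerivAt (fun x : ℝ => d - k * x) (-k) x := by
      simpa using ((hasDerivAt_id x).const_mul k).const_sub d
    have := ((h1.exp).fun_neg).div_const k
    exact this.congr_deriv (by rw [mul_neg, neg_neg, mul_div_assoc, div_self hk.ne', mul_one])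
  have hint : IntegrableOn (fun x => Real.exp (d - k * x)) (Ioi c) := by
    have heq : (fun x => Real.exp (d - k * x)) = fun x => Real.exp d * Real.exp (-k * x) := by
      funext x; rw [← Real.exp_add]; ring_nf
    rw [heq]
    exact (exp_neg_integrableOn_Ioi c hk).const_mul (Real.exp d)
  have htend : Tendsto (fun x => -(Real.exp (d - k * x)) / k) atTop (nhds 0) := by
    have h1 : Tendsto (fun x : ℝ => d - k * x) atTop atBot := by
      apply Filter.tendsto_atBot_add_const_left _ d
      exact (tendsto_neg_atBot_iff.2 (tendsto_id.const_mul_atTop hk))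
    have := (Real.tendsto_exp_atBot.comp h1).neg.div_const k
    simpa using this
  have := integral_Ioi_of_hasDerivAt_of_tendsto' hderiv hint htend
  rw [this]; ring

lemma intBIci {k : ℝ} (hk : 0 < k) (d c : ℝ) :
    ∫ x in Ici c, Real.exp (d - k * x) = Real.exp (d - k * c) / k := by
  rw [MeasureTheory.integral_Ici_eq_integral_Ioi]; exact intB hk d c

lemma intC {k : ℝ} (hk : 0 < k) {c : ℝ} (hc : 0 ≤ c) :
    ∫ y in Ico (0:ℝ) c, Real.exp (-(k * y)) = (1 - Real.exp (-(k * c))) / k := by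
  rw [MeasureTheory.integral_Ico_eq_integral_Ioo, ← MeasureTheory.integral_Ioc_eq_integral_Ioo,
      ← intervalIntegral.integral_of_le hc]
  have hderiv : ∀ y ∈ uIcc (0:ℝ) c, HasDerivAt (fun y => -(Real.exp (-(k * y))) / k)
      (Real.exp (-(k * y))) y := by
    intro y _
    have h1 : HasDerivAt (fun y : ℝ => -(k * y)) (-k) y := by
      simpa using ((hasDerivAt_id y).const_mul k).fun_neg
    have := ((h1.exp).fun_neg).div_const k
    exact this.congr_deriv (by rw [mul_neg, neg_neg, mul_div_assoc, div_self hk.ne', mul_one])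
  rw [intervalIntegral.integral_eq_sub_of_hasDerivAt hderiv
    (Continuous.intervalIntegrable (by continuity) 0 c)]
  simp
  ring

lemma intCgen {k : ℝ} (hk : 0 < k) {c : ℝ} (hc : 0 ≤ c) (d : ℝ) :
    ∫ y in Ico (0:ℝ) c, Real.exp (d - k * y) = Real.exp d * ((1 - Real.exp (-(k * c))) / k) := by
  have heq : (fun y => Real.exp (d - k * y)) = fun y => Real.exp d * Real.exp (-(k * y)) := by
    funext y; rw [← Real.exp_add]; ring_nf
  rw [heq, MeasureTheory.integral_const_mul, intC hk hc]

lemma intAx (x c : ℝ) : ∫ y in Ici c, Real.exp (-x - y) = Real.exp (-x - c) := by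
  have h1 := intBIci one_pos (-x) c
  simp only [one_mul, div_one] at h1
  exact h1

lemma intAy (y c : ℝ) : ∫ x in Ici c, Real.exp (-x - y) = Real.exp (-c - y) := by
  have h1 := intBIci one_pos (-y) c
  simp only [one_mul, div_one] at h1
  rw [MeasureTheory.setIntegral_congr_fun measurableSet_Ici
      (fun x _ => by show Real.exp (-x - y) = Real.exp (-y - x); congr 1; ring), h1]
  congr 1; ring

lemma intAy' (y c : ℝ) : ∫ x in Ioi c, Real.exp (-x - y) = Real.exp (-c - y) := by
  rw [← MeasureTheory.integral_Ici_eq_integral_Ioi]; exact intAy y c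

lemma intOn_quad : IntegrableOn (fun p : ℝ × ℝ => Real.exp (-p.1 - p.2))
    (Ici (0:ℝ) ×ˢ Ici (0:ℝ)) := by
  have h1 : IntegrableOn (fun x : ℝ => Real.exp (-x)) (Ici (0:ℝ)) := by
    rw [integrableOn_Ici_iff_integrableOn_Ioi]
    simpa using exp_neg_integrableOn_Ioi (0:ℝ) one_pos
  have hfe : (fun p : ℝ × ℝ => Real.exp (-p.1 - p.2))
      = fun p : ℝ × ℝ => Real.exp (-p.1) * Real.exp (-p.2) := by
    funext p; rw [← Real.exp_add]; ring_nf
  rw [hfe, IntegrableOn, Measure.volume_eq_prod, ← Measure.prod_restrict]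
  exact h1.mul_prod h1


lemma int_xsec (S : Set ℝ) (hS : MeasurableSet S) (c : ℝ → ℝ) (hc : Measurable c)
    (T : Set (ℝ × ℝ)) (hT : T = {p : ℝ × ℝ | p.1 ∈ S ∧ c p.1 ≤ p.2})
    (hsub : T ⊆ Ici 0 ×ˢ Ici 0) :
    ∫ p in T, Real.exp (-p.1 - p.2) = ∫ x in S, Real.exp (-x - c x) := by
  subst hT
  set T := {p : ℝ × ℝ | p.1 ∈ S ∧ c p.1 ≤ p.2} with hT
  have hTm : MeasurableSet T := by
    have : T = (Prod.fst ⁻¹' S) ∩ {p : ℝ × ℝ | c p.1 ≤ p.2} := rfl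
    rw [this]
    exact (measurable_fst hS).inter
      (measurableSet_le (hc.comp measurable_fst) measurable_snd)
  have hint : IntegrableOn (fun p : ℝ × ℝ => Real.exp (-p.1 - p.2)) T :=
    intOn_quad.mono_set hsub
  have hI : Integrable (T.indicator fun p : ℝ × ℝ => Real.exp (-p.1 - p.2))
      (Measure.prod volume volume) := by
    rw [← Measure.volume_eq_prod]
    exact (integrable_indicator_iff hTm).2 hint
  rw [← MeasureTheory.integral_indicator hTm, Measure.volume_eq_prod,
    MeasureTheory.integral_prod _ hI]
  have key : ∀ x : ℝ, (∫ y, T.indicator (fun p : ℝ × ℝ => Real.exp (-p.1 - p.2)) (x, y))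
      = S.indicator (fun x => Real.exp (-x - c x)) x := by
    intro x
    by_cases hx : x ∈ S
    · have h1 : (fun y => T.indicator (fun p : ℝ × ℝ => Real.exp (-p.1 - p.2)) (x, y))
          = (Ici (c x)).indicator (fun y => Real.exp (-x - y)) := by
        funext y
        by_cases hy : c x ≤ y
        · rw [Set.indicator_of_mem (show (x, y) ∈ T from ⟨hx, hy⟩),
            Set.indicator_of_mem (Set.mem_Ici.2 hy)]
        · rw [Set.indicator_of_notMem (fun hmem => hy hmem.2),
            Set.indicator_of_notMem (fun hmem => hy (Set.mem_Ici.1 hmem))]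
      rw [h1, MeasureTheory.integral_indicator measurableSet_Ici, intAx,
        Set.indicator_of_mem hx]
    · have h1 : (fun y => T.indicator (fun p : ℝ × ℝ => Real.exp (-p.1 - p.2)) (x, y))
          = fun _ => 0 := by
        funext y; exact Set.indicator_of_notMem (fun hmem => hx hmem.1) _
      rw [h1, MeasureTheory.integral_zero, Set.indicator_of_notMem hx]
  rw [MeasureTheory.integral_congr_ae (Filter.Eventually.of_forall key),
    MeasureTheory.integral_indicator hS]

lemma int_ysec (S : Set ℝ) (hS : MeasurableSet S) (c : ℝ → ℝ) (hc : Measurable c)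
    (T : Set (ℝ × ℝ)) (hT : T = {p : ℝ × ℝ | p.2 ∈ S ∧ c p.2 ≤ p.1})
    (hsub : T ⊆ Ici 0 ×ˢ Ici 0) :
    ∫ p in T, Real.exp (-p.1 - p.2) = ∫ y in S, Real.exp (-(c y) - y) := by
  subst hT
  set T := {p : ℝ × ℝ | p.2 ∈ S ∧ c p.2 ≤ p.1} with hT
  have hTm : MeasurableSet T := by
    have : T = (Prod.snd ⁻¹' S) ∩ {p : ℝ × ℝ | c p.2 ≤ p.1} := rfl
    rw [this]
    exact (measurable_snd hS).inter
      (measurableSet_le (hc.comp measurable_snd) measurable_fst)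
  have hint : IntegrableOn (fun p : ℝ × ℝ => Real.exp (-p.1 - p.2)) T :=
    intOn_quad.mono_set hsub
  have hI : Integrable (T.indicator fun p : ℝ × ℝ => Real.exp (-p.1 - p.2))
      (Measure.prod volume volume) := by
    rw [← Measure.volume_eq_prod]
    exact (integrable_indicator_iff hTm).2 hint
  rw [← MeasureTheory.integral_indicator hTm, Measure.volume_eq_prod,
    MeasureTheory.integral_prod_symm _ hI]
  have key : ∀ y : ℝ, (∫ x, T.indicator (fun p : ℝ × ℝ => Real.exp (-p.1 - p.2)) (x, y))
      = S.indicator (fun y => Real.exp (-(c y) - y)) y := by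
    intro y
    by_cases hy : y ∈ S
    · have h1 : (fun x => T.indicator (fun p : ℝ × ℝ => Real.exp (-p.1 - p.2)) (x, y))
          = (Ici (c y)).indicator (fun x => Real.exp (-x - y)) := by
        funext x
        by_cases hx : c y ≤ x
        · rw [Set.indicator_of_mem (show (x, y) ∈ T from ⟨hy, hx⟩),
            Set.indicator_of_mem (Set.mem_Ici.2 hx)]
        · rw [Set.indicator_of_notMem (fun hmem => hx hmem.2),
            Set.indicator_of_notMem (fun hmem => hx (Set.mem_Ici.1 hmem))]
      rw [h1, MeasureTheory.integral_indicator measurableSet_Ici, intAy,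
        Set.indicator_of_mem hy]
    · have h1 : (fun x => T.indicator (fun p : ℝ × ℝ => Real.exp (-p.1 - p.2)) (x, y))
          = fun _ => 0 := by
        funext x; exact Set.indicator_of_notMem (fun hmem => hy hmem.1) _
      rw [h1, MeasureTheory.integral_zero, Set.indicator_of_notMem hy]
  rw [MeasureTheory.integral_congr_ae (Filter.Eventually.of_forall key),
    MeasureTheory.integral_indicator hS]

lemma int_ysec' (S : Set ℝ) (hS : MeasurableSet S) (c : ℝ → ℝ) (hc : Measurable c)
    (T : Set (ℝ × ℝ)) (hT : T = {p : ℝ × ℝ | p.2 ∈ S ∧ c p.2 < p.1})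
    (hsub : T ⊆ Ici 0 ×ˢ Ici 0) :
    ∫ p in T, Real.exp (-p.1 - p.2) = ∫ y in S, Real.exp (-(c y) - y) := by
  subst hT
  set T := {p : ℝ × ℝ | p.2 ∈ S ∧ c p.2 < p.1} with hT
  have hTm : MeasurableSet T := by
    have : T = (Prod.snd ⁻¹' S) ∩ {p : ℝ × ℝ | c p.2 < p.1} := rfl
    rw [this]
    exact (measurable_snd hS).inter
      (measurableSet_lt (hc.comp measurable_snd) measurable_fst)
  have hint : IntegrableOn (fun p : ℝ × ℝ => Real.exp (-p.1 - p.2)) T :=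
    intOn_quad.mono_set hsub
  have hI : Integrable (T.indicator fun p : ℝ × ℝ => Real.exp (-p.1 - p.2))
      (Measure.prod volume volume) := by
    rw [← Measure.volume_eq_prod]
    exact (integrable_indicator_iff hTm).2 hint
  rw [← MeasureTheory.integral_indicator hTm, Measure.volume_eq_prod,
    MeasureTheory.integral_prod_symm _ hI]
  have key : ∀ y : ℝ, (∫ x, T.indicator (fun p : ℝ × ℝ => Real.exp (-p.1 - p.2)) (x, y))
      = S.indicator (fun y => Real.exp (-(c y) - y)) y := by
    intro y
    by_cases hy : y ∈ S
    · have h1 : (fun x => T.indicator (fun p : ℝ × ℝ => Real.exp (-p.1 - p.2)) (x, y))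
          = (Ioi (c y)).indicator (fun x => Real.exp (-x - y)) := by
        funext x
        by_cases hx : c y < x
        · rw [Set.indicator_of_mem (show (x, y) ∈ T from ⟨hy, hx⟩),
            Set.indicator_of_mem (Set.mem_Ioi.2 hx)]
        · rw [Set.indicator_of_notMem (fun hmem => hx hmem.2),
            Set.indicator_of_notMem (fun hmem => hx (Set.mem_Ioi.1 hmem))]
      rw [h1, MeasureTheory.integral_indicator measurableSet_Ioi, intAy',
        Set.indicator_of_mem hy]
    · have h1 : (fun x => T.indicator (fun p : ℝ × ℝ => Real.exp (-p.1 - p.2)) (x, y))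
          = fun _ => 0 := by
        funext x; exact Set.indicator_of_notMem (fun hmem => hy hmem.1) _
      rw [h1, MeasureTheory.integral_zero, Set.indicator_of_notMem hy]
  rw [MeasureTheory.integral_congr_ae (Filter.Eventually.of_forall key),
    MeasureTheory.integral_indicator hS]

/-- Closed form of the SIC decoding probability (equation (27) of the paper,
case `θi · θj < 1`): the integral of the joint exponential density over the
decoding region equals the stated expression. -/
theorem stmt7 (lam mu θi θj : ℝ)
    (hlam : 0 < lam) (hmu : 0 < mu) (hθi : 0 < θi) (hθj : 0 < θj)
    (hprod : θi * θj < 1)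
    (s : ℝ) (hs : s = (θi + 1) / (1 / θj - θi))
    (A : Set (ℝ × ℝ))
    (hA : A = {p : ℝ × ℝ | 0 ≤ p.1 ∧ 0 ≤ p.2 ∧
      ((p.1 / lam ≥ θi ∧ (p.2 / mu) / (1 + p.1 / lam) ≥ θj) ∨
       ((p.1 / lam) / (1 + p.2 / mu) ≥ θi ∧ (p.2 / mu) / (1 + p.1 / lam) < θj))}) :
    ∫ p in A, Real.exp (-p.1 - p.2) =
      Real.exp (-(lam * θi) - mu * θj * (1 + θi)) +
      mu * Real.exp (-(lam * θi)) / (lam * θi + mu) *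
        (1 - Real.exp (-(s * (lam * θi + mu)))) +
      mu / (lam / θj + mu) *
        (Real.exp (-(s * (lam / θj + mu)) + lam) -
          Real.exp (-(lam * θi) - θj * mu * (1 + θi))) := by
  have hlam' : lam ≠ 0 := hlam.ne'
  have hmu' : mu ≠ 0 := hmu.ne'
  have hθj' : θj ≠ 0 := hθj.ne'
  have hD : 0 < 1 / θj - θi := by
    rw [sub_pos, lt_div_iff₀ hθj]; linarith
  have hs0 : 0 < s := hs ▸ div_pos (by linarith) hD
  have hmus : 0 < mu * s := mul_pos hmu hs0
  -- the three regions
  set R1 : Set (ℝ × ℝ) :=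
    {p : ℝ × ℝ | p.1 ∈ Ici (lam * θi) ∧ mu * (θj * (1 + p.1 / lam)) ≤ p.2} with hR1
  set R2a : Set (ℝ × ℝ) :=
    {p : ℝ × ℝ | p.2 ∈ Ico (0:ℝ) (mu * s) ∧ lam * (θi * (1 + p.2 / mu)) ≤ p.1} with hR2a
  set R2b : Set (ℝ × ℝ) :=
    {p : ℝ × ℝ | p.2 ∈ Ici (mu * s) ∧ lam * (p.2 / (mu * θj) - 1) < p.1} with hR2b
  -- key comparison facts
  have hKs : ∀ y : ℝ, y < mu * s → y * (1 / θj - θi) < mu * (θi + 1) := by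
    intro y hy
    rw [hs, show mu * ((θi + 1) / (1 / θj - θi)) = (mu * (θi + 1)) / (1 / θj - θi) by ring]
      at hy
    exact (lt_div_iff₀ hD).1 hy
  have hKs' : ∀ y : ℝ, mu * s ≤ y → mu * (θi + 1) ≤ y * (1 / θj - θi) := by
    intro y hy
    rw [hs, show mu * ((θi + 1) / (1 / θj - θi)) = (mu * (θi + 1)) / (1 / θj - θi) by ring]
      at hy
    exact (div_le_iff₀ hD).1 hy
  have hK3 : ∀ x y : ℝ, y < mu * (θj * (1 + x / lam)) ↔ lam * (y / (mu * θj) - 1) < x := by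
    intro x y
    rw [show mu * (θj * (1 + x / lam)) = (mu * θj * (lam + x)) / lam by field_simp,
      show lam * (y / (mu * θj) - 1) = (lam * (y - mu * θj)) / (mu * θj) by field_simp,
      lt_div_iff₀ hlam, div_lt_iff₀ (mul_pos hmu hθj)]
    constructor <;> intro h <;> nlinarith [h]
  have hK1 : ∀ y : ℝ, y < mu * s →
      lam * (y / (mu * θj) - 1) < lam * (θi * (1 + y / mu)) := by
    intro y hy
    have h3 := mul_lt_mul_of_pos_right (hKs y hy) hθj
    have he : y * (1 / θj - θi) * θj = y * (1 - θi * θj) := by rw [mul_assoc, sub_mul, one_div, inv_mul_cancel₀ hθj']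
    have h2 : y * (1 - θi * θj) < mu * θj * (θi + 1) := by rw [← he]; nlinarith [h3]
    rw [show lam * (y / (mu * θj) - 1) = (lam * (y - mu * θj)) / (mu * θj) by field_simp,
      show lam * (θi * (1 + y / mu)) = (lam * θi * (mu + y)) / mu by field_simp,
      div_lt_div_iff₀ (mul_pos hmu hθj) hmu]
    nlinarith [mul_lt_mul_of_pos_left h2 (mul_pos hlam hmu)]
  have hK2 : ∀ y : ℝ, mu * s ≤ y →
      lam * (θi * (1 + y / mu)) ≤ lam * (y / (mu * θj) - 1) := by
    intro y hy
    have h3 := mul_le_mul_of_nonneg_right (hKs' y hy) hθj.le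
    have he : y * (1 / θj - θi) * θj = y * (1 - θi * θj) := by rw [mul_assoc, sub_mul, one_div, inv_mul_cancel₀ hθj']
    have h2 : mu * θj * (θi + 1) ≤ y * (1 - θi * θj) := by rw [← he]; nlinarith [h3]
    rw [show lam * (y / (mu * θj) - 1) = (lam * (y - mu * θj)) / (mu * θj) by field_simp,
      show lam * (θi * (1 + y / mu)) = (lam * θi * (mu + y)) / mu by field_simp,
      div_le_div_iff₀ hmu (mul_pos hmu hθj)]
    nlinarith [mul_le_mul_of_nonneg_left h2 (mul_pos hlam hmu).le]
  -- division-form equivalences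
  have hc1iff : ∀ x : ℝ, (θi ≤ x / lam ↔ lam * θi ≤ x) := by
    intro x
    rw [le_div_iff₀ hlam, show θi * lam = lam * θi by ring]
  have hc2iff : ∀ x y : ℝ, 0 ≤ x →
      (θj ≤ y / mu / (1 + x / lam) ↔ mu * (θj * (1 + x / lam)) ≤ y) := by
    intro x y hx
    have hx1 : (0:ℝ) < 1 + x / lam := by
      have := div_nonneg hx hlam.le; linarith
    rw [le_div_iff₀ hx1, le_div_iff₀ hmu,
      show θj * (1 + x / lam) * mu = mu * (θj * (1 + x / lam)) by ring]
  have hc2iff' : ∀ x y : ℝ, 0 ≤ x →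
      (y / mu / (1 + x / lam) < θj ↔ y < mu * (θj * (1 + x / lam))) := by
    intro x y hx
    have hx1 : (0:ℝ) < 1 + x / lam := by
      have := div_nonneg hx hlam.le; linarith
    rw [div_lt_iff₀ hx1, div_lt_iff₀ hmu,
      show θj * (1 + x / lam) * mu = mu * (θj * (1 + x / lam)) by ring]
  have hc3iff : ∀ x y : ℝ, 0 ≤ y →
      (θi ≤ x / lam / (1 + y / mu) ↔ lam * (θi * (1 + y / mu)) ≤ x) := by
    intro x y hy
    have hy1 : (0:ℝ) < 1 + y / mu := by
      have := div_nonneg hy hmu.le; linarith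
    rw [le_div_iff₀ hy1, le_div_iff₀ hlam,
      show θi * (1 + y / mu) * lam = lam * (θi * (1 + y / mu)) by ring]
  -- nonnegativity helpers
  have hpos1 : ∀ x : ℝ, 0 ≤ x → 0 ≤ mu * (θj * (1 + x / lam)) := by
    intro x hx
    have hx1 : (0:ℝ) ≤ 1 + x / lam := by
      have := div_nonneg hx hlam.le; linarith
    exact mul_nonneg hmu.le (mul_nonneg hθj.le hx1)
  have hpos2 : ∀ y : ℝ, 0 ≤ y → 0 ≤ lam * (θi * (1 + y / mu)) := by
    intro y hy
    have hy1 : (0:ℝ) ≤ 1 + y / mu := by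
      have := div_nonneg hy hmu.le; linarith
    exact mul_nonneg hlam.le (mul_nonneg hθi.le hy1)
  -- the decomposition
  have hAeq : A = (R1 ∪ R2a) ∪ R2b := by
    rw [hA, hR1, hR2a, hR2b]
    ext ⟨x, y⟩
    simp only [Set.mem_setOf_eq, Set.mem_union, Set.mem_Ici, Set.mem_Ico, ge_iff_le]
    constructor
    · rintro ⟨hx0, hy0, h | h⟩
      · exact Or.inl (Or.inl ⟨(hc1iff x).1 h.1, (hc2iff x y hx0).1 h.2⟩)
      · have hg2 : lam * (θi * (1 + y / mu)) ≤ x := (hc3iff x y hy0).1 h.1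
        have hlt : y < mu * (θj * (1 + x / lam)) := (hc2iff' x y hx0).1 h.2
        by_cases hcase : y < mu * s
        · exact Or.inl (Or.inr ⟨⟨hy0, hcase⟩, hg2⟩)
        · exact Or.inr ⟨not_lt.1 hcase, (hK3 x y).1 hlt⟩
    · rintro ((⟨hx, hy⟩ | ⟨⟨hy0, hys⟩, hg⟩) | ⟨hys, hg⟩)
      · have hx0 : 0 ≤ x := le_trans (mul_pos hlam hθi).le hx
        have hy0 : 0 ≤ y := le_trans (hpos1 x hx0) hy
        exact ⟨hx0, hy0, Or.inl ⟨(hc1iff x).2 hx, (hc2iff x y hx0).2 hy⟩⟩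
      · have hx0 : 0 ≤ x := le_trans (hpos2 y hy0) hg
        have h3 : lam * (y / (mu * θj) - 1) < x := lt_of_lt_of_le (hK1 y hys) hg
        have hlt : y < mu * (θj * (1 + x / lam)) := (hK3 x y).2 h3
        exact ⟨hx0, hy0, Or.inr ⟨(hc3iff x y hy0).2 hg, (hc2iff' x y hx0).2 hlt⟩⟩
      · have hy0 : 0 ≤ y := le_trans hmus.le hys
        have hg2 : lam * (θi * (1 + y / mu)) ≤ x := le_trans (hK2 y hys) hg.le
        have hx0 : 0 ≤ x := le_trans (hpos2 y hy0) hg2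
        have hlt : y < mu * (θj * (1 + x / lam)) := (hK3 x y).2 hg
        exact ⟨hx0, hy0, Or.inr ⟨(hc3iff x y hy0).2 hg2, (hc2iff' x y hx0).2 hlt⟩⟩
  -- quadrant inclusions
  have hq1 : R1 ⊆ Ici 0 ×ˢ Ici 0 := by
    rintro ⟨x, y⟩ ⟨hx, hy⟩
    have hx0 : 0 ≤ x := le_trans (mul_pos hlam hθi).le hx
    exact ⟨hx0, le_trans (hpos1 x hx0) hy⟩
  have hq2a : R2a ⊆ Ici 0 ×ˢ Ici 0 := by
    rintro ⟨x, y⟩ ⟨⟨hy0, _⟩, hg⟩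
    exact ⟨le_trans (hpos2 y hy0) hg, hy0⟩
  have hq2b : R2b ⊆ Ici 0 ×ˢ Ici 0 := by
    rintro ⟨x, y⟩ ⟨hys, hg⟩
    have hy0 : 0 ≤ y := le_trans hmus.le hys
    exact ⟨le_trans (hpos2 y hy0) (le_trans (hK2 y hys) hg.le), hy0⟩
  -- measurability
  have hmR2a : MeasurableSet R2a := by
    have : R2a = (Prod.snd ⁻¹' Ico (0:ℝ) (mu * s)) ∩
        {p : ℝ × ℝ | lam * (θi * (1 + p.2 / mu)) ≤ p.1} := rfl
    rw [this]
    exact (measurable_snd measurableSet_Ico).inter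
      (measurableSet_le (by fun_prop) measurable_fst)
  have hmR2b : MeasurableSet R2b := by
    have : R2b = (Prod.snd ⁻¹' Ici (mu * s)) ∩
        {p : ℝ × ℝ | lam * (p.2 / (mu * θj) - 1) < p.1} := rfl
    rw [this]
    exact (measurable_snd measurableSet_Ici).inter
      (measurableSet_lt (by fun_prop) measurable_fst)
  -- integrability
  have hi1 : IntegrableOn (fun p : ℝ × ℝ => Real.exp (-p.1 - p.2)) R1 :=
    intOn_quad.mono_set hq1
  have hi2a : IntegrableOn (fun p : ℝ × ℝ => Real.exp (-p.1 - p.2)) R2a :=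
    intOn_quad.mono_set hq2a
  have hi2b : IntegrableOn (fun p : ℝ × ℝ => Real.exp (-p.1 - p.2)) R2b :=
    intOn_quad.mono_set hq2b
  -- disjointness
  have hd1a : Disjoint R1 R2a := by
    rw [Set.disjoint_left]
    rintro ⟨x, y⟩ ⟨_, hy1⟩ ⟨⟨hy0, hys⟩, hg⟩
    have h3 : lam * (y / (mu * θj) - 1) < x := lt_of_lt_of_le (hK1 y hys) hg
    exact absurd hy1 (not_le.2 ((hK3 x y).2 h3))
  have hd1b : Disjoint R1 R2b := by
    rw [Set.disjoint_left]
    rintro ⟨x, y⟩ ⟨_, hy1⟩ ⟨hys, hg⟩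
    exact absurd hy1 (not_le.2 ((hK3 x y).2 hg))
  have hdab : Disjoint R2a R2b := by
    rw [Set.disjoint_left]
    rintro ⟨x, y⟩ ⟨⟨_, hys⟩, _⟩ ⟨hys', _⟩
    exact absurd hys' (not_le.2 hys)
  -- split the integral
  rw [hAeq, MeasureTheory.setIntegral_union (Set.disjoint_union_left.2 ⟨hd1b, hdab⟩) hmR2b
      (hi1.union hi2a) hi2b,
    MeasureTheory.setIntegral_union hd1a hmR2a hi1 hi2a]
  rw [int_xsec (Ici (lam * θi)) measurableSet_Ici
      (fun x => mu * (θj * (1 + x / lam))) (by fun_prop) R1 rfl hq1,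
    int_ysec (Ico (0:ℝ) (mu * s)) measurableSet_Ico
      (fun y => lam * (θi * (1 + y / mu))) (by fun_prop) R2a rfl hq2a,
    int_ysec' (Ici (mu * s)) measurableSet_Ici
      (fun y => lam * (y / (mu * θj) - 1)) (by fun_prop) R2b rfl hq2b]
  have hk1 : 0 < 1 + mu * θj / lam := by
    have : 0 < mu * θj / lam := div_pos (mul_pos hmu hθj) hlam
    linarith
  have hk2 : 0 < 1 + lam * θi / mu := by
    have : 0 < lam * θi / mu := div_pos (mul_pos hlam hθi) hmu
    linarith
  have hk3 : 0 < 1 + lam / (mu * θj) := by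
    have : 0 < lam / (mu * θj) := div_pos hlam (mul_pos hmu hθj)
    linarith
  have i1 : ∫ x in Ici (lam * θi),
      Real.exp (-x - (fun x => mu * (θj * (1 + x / lam))) x)
      = Real.exp (-(mu * θj) - (1 + mu * θj / lam) * (lam * θi)) / (1 + mu * θj / lam) := by
    rw [MeasureTheory.setIntegral_congr_fun measurableSet_Ici (fun x _ => by
      show Real.exp (-x - mu * (θj * (1 + x / lam)))
        = Real.exp (-(mu * θj) - (1 + mu * θj / lam) * x)
      congr 1; field_simp; ring)]
    exact intBIci hk1 _ _
  have i2 : ∫ y in Ico (0:ℝ) (mu * s),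
      Real.exp (-((fun y => lam * (θi * (1 + y / mu))) y) - y)
      = Real.exp (-(lam * θi)) *
        ((1 - Real.exp (-((1 + lam * θi / mu) * (mu * s)))) / (1 + lam * θi / mu)) := by
    rw [MeasureTheory.setIntegral_congr_fun measurableSet_Ico (fun y _ => by
      show Real.exp (-(lam * (θi * (1 + y / mu))) - y)
        = Real.exp (-(lam * θi) - (1 + lam * θi / mu) * y)
      congr 1; field_simp; ring)]
    exact intCgen hk2 hmus.le _
  have i3 : ∫ y in Ici (mu * s),
      Real.exp (-((fun y => lam * (y / (mu * θj) - 1)) y) - y)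
      = Real.exp (lam - (1 + lam / (mu * θj)) * (mu * s)) / (1 + lam / (mu * θj)) := by
    rw [MeasureTheory.setIntegral_congr_fun measurableSet_Ici (fun y _ => by
      show Real.exp (-(lam * (y / (mu * θj) - 1)) - y)
        = Real.exp (lam - (1 + lam / (mu * θj)) * y)
      congr 1; field_simp; ring)]
    exact intBIci hk3 _ _
  rw [i1, i2, i3]
  rw [show -(mu * θj) - (1 + mu * θj / lam) * (lam * θi)
        = -(lam * θi) - mu * θj * (1 + θi) by field_simp; ring,
    show (1 + lam * θi / mu) * (mu * s) = s * (lam * θi + mu) by field_simp; ring,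
    show lam - (1 + lam / (mu * θj)) * (mu * s) = -(s * (lam / θj + mu)) + lam by
      field_simp; ring,
    show Real.exp (-(lam * θi) - θj * mu * (1 + θi))
        = Real.exp (-(lam * θi) - mu * θj * (1 + θi)) by congr 1; ring]
  have hne4 : lam * θi + mu ≠ 0 := (add_pos (mul_pos hlam hθi) hmu).ne'
  have hne5 : lam / θj + mu ≠ 0 := (add_pos (div_pos hlam hθj) hmu).ne'
  field_simp
  ring
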